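/- Let H be a real Hilbert space and A : H → H a bounded surjective linear operator. If there exists a constant c > 1 such that ‖A* y‖ ≥ c·‖y‖ for all y ∈ H, then the bounded linear map H × H → H × H, (x, y) ↦ (x − A y, A x + y), is surjective. -/

import Mathlib

open ContinuousLinearMap RealInnerProductSpace

theorem stmt17 (H : Type*) [NormedAddCommGroup H] [InnerProductSpace ℝ H]
    [CompleteSpace H] (A : H →L[ℝ] H) (hA : Function.Surjective A)
    (c : ℝ) (hc : 1 < c)
    (h : ∀ y : H, c * ‖y‖ ≤ ‖ContinuousLinearMap.adjoint A y‖) :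
    Function.Surjective (fun p : H × H => (p.1 - A p.2, A p.1 + p.2)) := by
  classical
  set A' := ContinuousLinearMap.adjoint A with hA'def
  let e : WithLp 2 (H × H) ≃L[ℝ] H × H := WithLp.prodContinuousLinearEquiv 2 ℝ H H
  let F : H × H →L[ℝ] H × H :=
    ((ContinuousLinearMap.fst ℝ H H) - A ∘L (ContinuousLinearMap.snd ℝ H H)).prod
      (A ∘L (ContinuousLinearMap.fst ℝ H H) + (ContinuousLinearMap.snd ℝ H H))
  let G : H × H →L[ℝ] H × H :=
    ((ContinuousLinearMap.fst ℝ H H) + A' ∘L (ContinuousLinearMap.snd ℝ H H)).prod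
      ((ContinuousLinearMap.snd ℝ H H) - A' ∘L (ContinuousLinearMap.fst ℝ H H))
  let T : WithLp 2 (H × H) →L[ℝ] WithLp 2 (H × H) :=
    e.symm.toContinuousLinearMap ∘L F ∘L e.toContinuousLinearMap
  let S : WithLp 2 (H × H) →L[ℝ] WithLp 2 (H × H) :=
    e.symm.toContinuousLinearMap ∘L G ∘L e.toContinuousLinearMap
  have hSfst : ∀ q : WithLp 2 (H × H), (S q).fst = q.fst + A' q.snd := fun q => rfl
  have hSsnd : ∀ q : WithLp 2 (H × H), (S q).snd = q.snd - A' q.fst := fun q => rfl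
  have hTfst : ∀ p : WithLp 2 (H × H), (T p).fst = p.fst - A p.snd := fun p => rfl
  have hTsnd : ∀ p : WithLp 2 (H × H), (T p).snd = A p.fst + p.snd := fun p => rfl
  -- adjoint relation
  have hadj : ∀ p q : WithLp 2 (H × H), ⟪T p, q⟫ = ⟪p, S q⟫ := by
    intro p q
    rw [WithLp.prod_inner_apply, WithLp.prod_inner_apply]
    change ⟪(T p).fst, q.fst⟫ + ⟪(T p).snd, q.snd⟫ = ⟪p.fst, (S q).fst⟫ + ⟪p.snd, (S q).snd⟫
    rw [hTfst, hTsnd, hSfst, hSsnd]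
    simp only [inner_sub_left, inner_add_left, inner_add_right, inner_sub_right,
      ContinuousLinearMap.adjoint_inner_right, hA'def]
    ring
  -- lower bound for S
  have hS : ∀ q : WithLp 2 (H × H), (c - 1) * ‖q‖ ≤ ‖S q‖ := by
    intro q
    have h1 : c * ‖q‖ ≤ ‖S q - q‖ := by
      have hsq : (c * ‖q‖) ^ 2 ≤ ‖S q - q‖ ^ 2 := by
        have hq : ‖q‖ ^ 2 = ‖q.fst‖ ^ 2 + ‖q.snd‖ ^ 2 := WithLp.prod_norm_sq_eq_of_L2 q
        rw [WithLp.prod_norm_sq_eq_of_L2, mul_pow, hq]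
        have e1 : (S q - q).fst = A' q.snd := by
          simp [hSfst q]
        have e2 : (S q - q).snd = -(A' q.fst) := by
          simp [hSsnd q]
        rw [e1, e2, norm_neg]
        have b1 := h q.fst
        have b2 := h q.snd
        have hc0 : (0:ℝ) ≤ c := by linarith
        have sq1 : (c * ‖q.fst‖) ^ 2 ≤ ‖A' q.fst‖ ^ 2 := by
          apply pow_le_pow_left₀ (by positivity) b1
        have sq2 : (c * ‖q.snd‖) ^ 2 ≤ ‖A' q.snd‖ ^ 2 := by
          apply pow_le_pow_left₀ (by positivity) b2
        nlinarith [sq1, sq2]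
      have := Real.sqrt_le_sqrt hsq
      rwa [Real.sqrt_sq (by positivity), Real.sqrt_sq (norm_nonneg _)] at this
    have h2 : ‖S q - q‖ ≤ ‖S q‖ + ‖q‖ := norm_sub_le _ _
    linarith
  -- coercive bilinear form
  let B : WithLp 2 (H × H) →L[ℝ] WithLp 2 (H × H) →L[ℝ] ℝ :=
    (innerSL ℝ).comp (T ∘L S)
  have hB : ∀ u v : WithLp 2 (H × H), B u v = ⟪T (S u), v⟫ := fun u v => rfl
  have coercive : IsCoercive B := by
    refine ⟨(c - 1) ^ 2, pow_pos (by linarith) 2, fun u => ?_⟩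
    rw [hB, hadj (S u) u, real_inner_self_eq_norm_mul_norm]
    have := hS u
    have h0 : (0:ℝ) ≤ (c - 1) * ‖u‖ := mul_nonneg (by linarith) (norm_nonneg _)
    nlinarith [hS u]
  -- T is surjective
  have hTsurj : Function.Surjective T := by
    intro w
    refine ⟨S (coercive.continuousLinearEquivOfBilin.symm w), ?_⟩
    have key : T (S (coercive.continuousLinearEquivOfBilin.symm w)) =
        coercive.continuousLinearEquivOfBilin (coercive.continuousLinearEquivOfBilin.symm w) :=
      coercive.unique_continuousLinearEquivOfBilin (fun w' => rfl)
    rw [key, ContinuousLinearEquiv.apply_symm_apply]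
  -- transfer
  intro uv
  obtain ⟨z, hz⟩ := hTsurj (e.symm uv)
  refine ⟨e z, ?_⟩
  have : e (T z) = e (e.symm uv) := congrArg e hz
  rw [ContinuousLinearEquiv.apply_symm_apply] at this
  have hFz : F (e z) = uv := by
    simpa [T, Function.comp] using this
  simpa [F] using hFz
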